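/- arXiv:1812.10041 — 3 statements merged into one kernel-verified Lean document; each statement's English description precedes it below -/
import Mathlib

section
/- Let X_1, …, X_d be n-by-n real matrices with ‖Σ_i X_i ⊗ X_i‖ < 1 for a consistent matrix norm, and let P = [(I − Σ_i X_i ⊗ X_i)^{-1}]^ψ. Then P = Σ_{k=0}^∞ Σ_{i_1,…,i_k ∈ {1,…,d}} (vec X_{i_1}⋯X_{i_k})(vec X_{i_1}⋯X_{i_k})ᵀ, where the k = 0 term is (vec I)(vec I)ᵀ. -/
open Matrix Kronecker

/-- `vec` stacks the columns of a matrix into a single column vector. -/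
def vec {n : ℕ} (A : Matrix (Fin n) (Fin n) ℝ) : Fin n × Fin n → ℝ :=
  fun p => A p.1 p.2

/-- The ψ-involution on n²-by-n² matrices. -/
def psi {n : ℕ} (A : Matrix (Fin n × Fin n) (Fin n × Fin n) ℝ) :
    Matrix (Fin n × Fin n) (Fin n × Fin n) ℝ :=
  fun p q => A (p.1, q.1) (p.2, q.2)

/-- `psi` as an additive monoid homomorphism. -/
def psiHom {n : ℕ} :
    Matrix (Fin n × Fin n) (Fin n × Fin n) ℝ →+ Matrix (Fin n × Fin n) (Fin n × Fin n) ℝ where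
  toFun := psi
  map_zero' := rfl
  map_add' _ _ := rfl

lemma psi_continuous {n : ℕ} : Continuous (psi (n := n)) :=
  continuous_matrix fun p q => (continuous_id.matrix_elem (p.1, q.1) (p.2, q.2))

lemma psi_kron {n : ℕ} (A B : Matrix (Fin n) (Fin n) ℝ) :
    psi (A ⊗ₖ B) = vecMulVec (_root_.vec A) (_root_.vec B) := rfl

/-- Any matrix norm dominates entries up to a constant. -/
lemma entry_bound {m : Type*} [Fintype m] [DecidableEq m]
    (ν : Matrix m m ℝ → ℝ)
    (hnonneg : ∀ A, 0 ≤ ν A)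
    (hdef : ∀ A, ν A = 0 → A = 0)
    (htri : ∀ A B, ν (A + B) ≤ ν A + ν B)
    (hsmul : ∀ (c : ℝ) A, ν (c • A) = |c| * ν A) :
    ∃ c : ℝ, 0 ≤ c ∧ ∀ A : Matrix m m ℝ, ∀ p q, |A p q| ≤ c * ν A := by
  have h0 : ν 0 = 0 := by simpa using hsmul 0 0
  have hneg : ∀ A, ν (-A) = ν A := fun A => by simpa using hsmul (-1) A
  letI N : NormedAddCommGroup (Matrix m m ℝ) :=
    AddGroupNorm.toNormedAddCommGroup
      { toFun := ν, map_zero' := h0, add_le' := htri, neg' := hneg,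
        eq_zero_of_map_eq_zero' := hdef }
  letI : NormedSpace ℝ (Matrix m m ℝ) :=
    { norm_smul_le := fun c A => le_of_eq (hsmul c A) }
  letI tE : TopologicalSpace (Matrix m m ℝ) :=
    N.toMetricSpace.toPseudoMetricSpace.toUniformSpace.toTopologicalSpace
  have hcont : ∀ p q : m, ∃ Cpq : ℝ, 0 ≤ Cpq ∧ ∀ A : Matrix m m ℝ, |A p q| ≤ Cpq * ν A := by
    intro p q
    let f : Matrix m m ℝ →ₗ[ℝ] ℝ :=
      { toFun := fun A => A p q, map_add' := fun _ _ => rfl, map_smul' := fun _ _ => rfl }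
    have hfc : @Continuous (Matrix m m ℝ) ℝ tE
        UniformSpace.toTopologicalSpace ⇑f := f.continuous_of_finiteDimensional
    obtain ⟨Cpq, hCpos, hbd⟩ := SemilinearMapClass.bound_of_continuous f hfc
    exact ⟨Cpq, hCpos.le, fun A => by have := hbd A; rw [Real.norm_eq_abs] at this; exact this⟩
  choose C hC0 hC using hcont
  refine ⟨∑ p, ∑ q, C p q, Finset.sum_nonneg fun p _ => Finset.sum_nonneg fun q _ => hC0 p q,
    fun A p q => ?_⟩
  refine (hC p q A).trans (mul_le_mul_of_nonneg_right ?_ (hnonneg A))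
  calc C p q ≤ ∑ q', C p q' :=
        Finset.single_le_sum (fun q' _ => hC0 p q') (Finset.mem_univ q)
    _ ≤ ∑ p', ∑ q', C p' q' :=
        Finset.single_le_sum (fun p' _ => Finset.sum_nonneg fun q' _ => hC0 p' q')
          (Finset.mem_univ p)

lemma pow_kron {n d : ℕ} (X : Fin d → Matrix (Fin n) (Fin n) ℝ) (k : ℕ) :
    (∑ i, X i ⊗ₖ X i) ^ k
      = ∑ w : Fin k → Fin d,
          ((List.ofFn fun j => X (w j)).prod ⊗ₖ (List.ofFn fun j => X (w j)).prod) := by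
  induction k with
  | zero => simp
  | succ k ih =>
    have key : ∀ (i : Fin d) (w : Fin k → Fin d),
        (List.ofFn fun j : Fin (k + 1) => X ((Fin.cons i w : Fin (k + 1) → Fin d) j)).prod
          = X i * (List.ofFn fun j => X (w j)).prod := by
      intro i w
      rw [List.ofFn_succ]
      simp [Fin.cons_zero, Fin.cons_succ]
    rw [pow_succ', ih, Finset.sum_mul_sum,
      ← Equiv.sum_comp (Fin.consEquiv fun _ => Fin d)
        (fun w : Fin (k + 1) → Fin d =>
          (List.ofFn fun j => X (w j)).prod ⊗ₖ (List.ofFn fun j => X (w j)).prod),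
      Fintype.sum_prod_type]
    refine Finset.sum_congr rfl fun i _ => Finset.sum_congr rfl fun w _ => ?_
    show _ = (List.ofFn fun j => X ((Fin.cons i w : Fin (k + 1) → Fin d) j)).prod ⊗ₖ
        (List.ofFn fun j => X ((Fin.cons i w : Fin (k + 1) → Fin d) j)).prod
    rw [key, mul_kronecker_mul]

theorem P_eq_sum_words {n d : ℕ} (X : Fin d → Matrix (Fin n) (Fin n) ℝ)
    (ν : Matrix (Fin n × Fin n) (Fin n × Fin n) ℝ → ℝ)
    (hnonneg : ∀ A, 0 ≤ ν A)
    (hdef : ∀ A, ν A = 0 → A = 0)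
    (htri : ∀ A B, ν (A + B) ≤ ν A + ν B)
    (hsmul : ∀ (c : ℝ) A, ν (c • A) = |c| * ν A)
    (hsubmul : ∀ A B, ν (A * B) ≤ ν A * ν B)
    (hlt : ν (∑ i, X i ⊗ₖ X i) < 1) :
    HasSum
      (fun k : ℕ => ∑ w : Fin k → Fin d,
        vecMulVec (_root_.vec (List.ofFn fun j => X (w j)).prod)
          (_root_.vec (List.ofFn fun j => X (w j)).prod))
      (psi (1 - ∑ i, X i ⊗ₖ X i)⁻¹) := by
  classical
  set S : Matrix (Fin n × Fin n) (Fin n × Fin n) ℝ := ∑ i, X i ⊗ₖ X i with hS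
  obtain ⟨c, hc0, hc⟩ := entry_bound ν hnonneg hdef htri hsmul
  have hS0 : 0 ≤ ν S := hnonneg S
  have hpow : ∀ k, ν (S ^ k) ≤ ν 1 * ν S ^ k := by
    intro k
    induction k with
    | zero => simp
    | succ k ih =>
      calc ν (S ^ (k + 1)) = ν (S ^ k * S) := by rw [pow_succ]
        _ ≤ ν (S ^ k) * ν S := hsubmul _ _
        _ ≤ (ν 1 * ν S ^ k) * ν S := mul_le_mul_of_nonneg_right ih hS0
        _ = ν 1 * ν S ^ (k + 1) := by ring
  have hsummable : ∀ p q, Summable (fun k => (S ^ k) p q) := by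
    intro p q
    apply Summable.of_abs
    refine Summable.of_nonneg_of_le (fun k => abs_nonneg _) (fun k => ?_)
      ((summable_geometric_of_lt_one hS0 hlt).mul_left (c * ν 1))
    calc |(S ^ k) p q| ≤ c * ν (S ^ k) := hc _ p q
      _ ≤ c * (ν 1 * ν S ^ k) := mul_le_mul_of_nonneg_left (hpow k) hc0
      _ = c * ν 1 * ν S ^ k := by ring
  set T : Matrix (Fin n × Fin n) (Fin n × Fin n) ℝ :=
    Matrix.of fun p q => ∑' k, (S ^ k) p q with hTdef
  have hT : HasSum (fun k => S ^ k) T :=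
    Pi.hasSum.2 fun p => Pi.hasSum.2 fun q => (hsummable p q).hasSum
  have h1 : HasSum (fun k => S ^ (k + 1)) (T - 1) := by
    have := (hasSum_nat_add_iff' (f := fun k => S ^ k) 1).2 hT
    simpa using this
  have hmulL : HasSum (fun k => S ^ (k + 1)) (S * T) := by
    have := hT.map (AddMonoidHom.mulLeft S) (continuous_mul_left S)
    simpa [Function.comp_def, pow_succ'] using this
  have hmulR : HasSum (fun k => S ^ (k + 1)) (T * S) := by
    have := hT.map (AddMonoidHom.mulRight S) (continuous_mul_right S)
    simpa [Function.comp_def, pow_succ] using this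
  have hST : S * T = T - 1 := hmulL.unique h1
  have hleft : (1 - S) * T = 1 := by
    rw [sub_mul, one_mul, hST]; abel
  have hinv : (1 - S)⁻¹ = T := inv_eq_right_inv hleft
  have hterm : ∀ k : ℕ, psi (S ^ k)
      = ∑ w : Fin k → Fin d,
          vecMulVec (_root_.vec (List.ofFn fun j => X (w j)).prod)
            (_root_.vec (List.ofFn fun j => X (w j)).prod) := by
    intro k
    have hmap := map_sum (psiHom (n := n))
      (fun w : Fin k → Fin d =>
        (List.ofFn fun j => X (w j)).prod ⊗ₖ (List.ofFn fun j => X (w j)).prod)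
      Finset.univ
    simp only [psiHom, AddMonoidHom.coe_mk, ZeroHom.coe_mk] at hmap
    rw [hS, pow_kron]; refine hmap.trans ?_
    exact Finset.sum_congr rfl fun w _ => psi_kron _ _
  have hpsi : HasSum (fun k => psi (S ^ k)) (psi T) :=
    hT.map (psiHom (n := n)) psi_continuous
  rw [hinv]
  simpa [hterm] using hpsi
end

section
/- Let X_1, …, X_d be n-by-n real matrices with ‖Σ_i X_i ⊗ X_i‖ < 1 for a consistent matrix norm, and let P = [(I − Σ_i X_i ⊗ X_i)^{-1}]^ψ. Then P is symmetric and positive semidefinite. -/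
open Matrix Kronecker

/-- Type copy of the matrix space, to carry the abstract norm. -/
def MatCopy (m : Type*) : Type _ := Matrix m m ℝ

noncomputable instance (m : Type*) : AddCommGroup (MatCopy m) :=
  inferInstanceAs (AddCommGroup (Matrix m m ℝ))

noncomputable instance (m : Type*) : Module ℝ (MatCopy m) :=
  inferInstanceAs (Module ℝ (Matrix m m ℝ))

noncomputable instance (m : Type*) [Finite m] : Module.Finite ℝ (MatCopy m) :=
  inferInstanceAs (Module.Finite ℝ (Matrix m m ℝ))

/-- Any abstract norm on a finite-dimensional matrix space dominates each entry
(up to a constant). -/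
lemma exists_entry_bound {m : Type*} [Fintype m]
    (ν : Matrix m m ℝ → ℝ)
    (hdef : ∀ A, ν A = 0 → A = 0)
    (htri : ∀ A B, ν (A + B) ≤ ν A + ν B)
    (hsmul : ∀ (c : ℝ) A, ν (c • A) = |c| * ν A)
    (p q : m) : ∃ c : ℝ, 0 ≤ c ∧ ∀ A, |A p q| ≤ c * ν A := by
  letI : NormedAddCommGroup (MatCopy m) :=
    AddGroupNorm.toNormedAddCommGroup
      { toFun := fun A : MatCopy m => ν A
        map_zero' := by have h := hsmul 0 0; simp at h; exact h
        add_le' := htri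
        neg' := fun A => by
          have h := hsmul (-1) (show Matrix m m ℝ from A); rw [neg_one_smul, abs_neg, abs_one, one_mul] at h; exact h
        eq_zero_of_map_eq_zero' := fun A h => hdef A h }
  letI : NormedSpace ℝ (MatCopy m) :=
    { norm_smul_le := fun c A => le_of_eq (hsmul c A) }
  let f : MatCopy m →ₗ[ℝ] ℝ :=
    { toFun := fun A : MatCopy m => (A : Matrix m m ℝ) p q
      map_add' := fun _ _ => rfl
      map_smul' := fun _ _ => rfl }
  let g := LinearMap.toContinuousLinearMap f
  refine ⟨‖g‖, norm_nonneg _, fun A => ?_⟩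
  have := g.le_opNorm (A : MatCopy m)
  exact this

lemma psi_sum {n : ℕ} {ι : Type*} (s : Finset ι)
    (f : ι → Matrix (Fin n × Fin n) (Fin n × Fin n) ℝ) :
    psi (∑ i ∈ s, f i) = ∑ i ∈ s, psi (f i) := by
  ext p q
  simp [psi, Matrix.sum_apply]

lemma psi_kron_self_posSemidef {n : ℕ} (M : Matrix (Fin n) (Fin n) ℝ) :
    (psi (M ⊗ₖ M)).PosSemidef := by
  have h : psi (M ⊗ₖ M) = (Matrix.replicateRow Unit (_root_.vec M))ᴴ * Matrix.replicateRow Unit (_root_.vec M) := by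
    ext p q
    simp [psi, Matrix.mul_apply, _root_.vec, Matrix.replicateRow_apply, mul_comm]
  rw [h]
  exact Matrix.posSemidef_conjTranspose_mul_self _

lemma posSemidef_sum {m : Type*} [Fintype m] {ι : Type*} (s : Finset ι)
    (f : ι → Matrix m m ℝ) (h : ∀ i ∈ s, (f i).PosSemidef) :
    (∑ i ∈ s, f i).PosSemidef := by
  classical
  induction s using Finset.induction with
  | empty => simpa using Matrix.PosSemidef.zero
  | @insert a s ha ih =>
    rw [Finset.sum_insert ha]
    exact (h a (Finset.mem_insert_self a s)).add
      (ih fun i hi => h i (Finset.mem_insert_of_mem hi))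

/-- Powers of a sum of Kronecker squares are sums of Kronecker squares. -/
lemma pow_rep {n d : ℕ} (X : Fin d → Matrix (Fin n) (Fin n) ℝ) (k : ℕ) :
    ∃ (ι : Type) (_ : Fintype ι) (M : ι → Matrix (Fin n) (Fin n) ℝ),
      (∑ i, X i ⊗ₖ X i) ^ k = ∑ t, M t ⊗ₖ M t := by
  induction k with
  | zero =>
    refine ⟨PUnit, inferInstance, fun _ => 1, ?_⟩
    simp [Matrix.one_kronecker_one]
  | succ k ih =>
    obtain ⟨ι, hι, M, hM⟩ := ih
    refine ⟨ι × Fin d, by infer_instance, fun t => M t.1 * X t.2, ?_⟩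
    rw [pow_succ, hM, Finset.sum_mul_sum]
    rw [← Finset.sum_product']
    refine Finset.sum_congr rfl fun t _ => ?_
    rw [Matrix.mul_kronecker_mul]

theorem P_symm_posSemidef {n d : ℕ} (X : Fin d → Matrix (Fin n) (Fin n) ℝ)
    (ν : Matrix (Fin n × Fin n) (Fin n × Fin n) ℝ → ℝ)
    (hnonneg : ∀ A, 0 ≤ ν A)
    (hdef : ∀ A, ν A = 0 → A = 0)
    (htri : ∀ A B, ν (A + B) ≤ ν A + ν B)
    (hsmul : ∀ (c : ℝ) A, ν (c • A) = |c| * ν A)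
    (hsubmul : ∀ A B, ν (A * B) ≤ ν A * ν B)
    (hlt : ν (∑ i, X i ⊗ₖ X i) < 1) :
    (psi (1 - ∑ i, X i ⊗ₖ X i)⁻¹).IsSymm ∧ (psi (1 - ∑ i, X i ⊗ₖ X i)⁻¹).PosSemidef := by
  classical
  set S : Matrix (Fin n × Fin n) (Fin n × Fin n) ℝ := ∑ i, X i ⊗ₖ X i with hS
  -- powers of ν
  have hr0 : 0 ≤ ν S := hnonneg S
  have hpow : ∀ k, ν (S ^ k) ≤ ν 1 * ν S ^ k := by
    intro k
    induction k with
    | zero => simp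
    | succ k ih =>
      calc ν (S ^ (k + 1)) = ν (S ^ k * S) := by rw [pow_succ]
        _ ≤ ν (S ^ k) * ν S := hsubmul _ _
        _ ≤ (ν 1 * ν S ^ k) * ν S := by
            exact mul_le_mul_of_nonneg_right ih hr0
        _ = ν 1 * ν S ^ (k + 1) := by ring
  -- entries of S^k tend to 0
  have hent : ∀ p q, Filter.Tendsto (fun k : ℕ => (S ^ k) p q) Filter.atTop (nhds 0) := by
    intro p q
    obtain ⟨c, hc0, hc⟩ := exists_entry_bound ν hdef htri hsmul p q
    have hb : Filter.Tendsto (fun k : ℕ => c * (ν 1 * ν S ^ k)) Filter.atTop (nhds 0) := by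
      have := tendsto_pow_atTop_nhds_zero_of_lt_one hr0 hlt
      simpa using (this.const_mul (ν 1)).const_mul c
    refine squeeze_zero_norm (fun k => ?_) hb
    calc ‖(S ^ k) p q‖ = |(S ^ k) p q| := rfl
      _ ≤ c * ν (S ^ k) := hc _
      _ ≤ c * (ν 1 * ν S ^ k) := mul_le_mul_of_nonneg_left (hpow k) hc0
  -- 1 - S is invertible
  have hdet : (1 - S).det ≠ 0 := by
    intro h0
    obtain ⟨v, hv, hveq⟩ := (Matrix.exists_mulVec_eq_zero_iff).mpr h0
    have hSv : S *ᵥ v = v := by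
      have := hveq
      rw [Matrix.sub_mulVec, Matrix.one_mulVec, sub_eq_zero] at this
      exact this.symm
    have hSkv : ∀ k, (S ^ k) *ᵥ v = v := by
      intro k
      induction k with
      | zero => simp
      | succ k ih => rw [pow_succ, ← Matrix.mulVec_mulVec, hSv, ih]
    apply hv
    funext p
    have h1 : Filter.Tendsto (fun k : ℕ => ((S ^ k) *ᵥ v) p) Filter.atTop (nhds 0) := by
      have : ∀ k : ℕ, ((S ^ k) *ᵥ v) p = ∑ q, (S ^ k) p q * v q := fun k => rfl
      simp only [this]
      have : Filter.Tendsto (fun k : ℕ => ∑ q, (S ^ k) p q * v q) Filter.atTop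
          (nhds (∑ q : Fin n × Fin n, 0 * v q)) := by
        exact tendsto_finset_sum _ fun q _ => (hent p q).mul_const (v q)
      simpa using this
    have h2 : Filter.Tendsto (fun _ : ℕ => v p) Filter.atTop (nhds (v p)) :=
      tendsto_const_nhds
    have := tendsto_nhds_unique (by simpa only [hSkv] using h1) h2
    simp [this.symm]
  have hunit : IsUnit (1 - S).det := isUnit_iff_ne_zero.mpr hdet
  set P : Matrix (Fin n × Fin n) (Fin n × Fin n) ℝ := (1 - S)⁻¹ with hP
  have hinv : (1 - S) * P = 1 := Matrix.mul_nonsing_inv _ hunit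
  -- partial sums
  have hpart : ∀ N : ℕ, (∑ k ∈ Finset.range N, S ^ k) = P - S ^ N * P := by
    intro N
    have h1 : (∑ k ∈ Finset.range N, S ^ k) * (1 - S) = 1 - S ^ N := by
      have := geom_sum_mul S N
      calc (∑ k ∈ Finset.range N, S ^ k) * (1 - S)
          = -((∑ k ∈ Finset.range N, S ^ k) * (S - 1)) := by rw [← mul_neg, neg_sub]
        _ = -(S ^ N - 1) := by rw [this]
        _ = 1 - S ^ N := by rw [neg_sub]
    have h2 : (∑ k ∈ Finset.range N, S ^ k) * ((1 - S) * P) = (1 - S ^ N) * P := by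
      rw [← mul_assoc, h1]
    rw [hinv, mul_one] at h2
    rw [h2, sub_mul, one_mul]
  -- entrywise convergence of partial sums to P
  have hTend : ∀ p q, Filter.Tendsto
      (fun N : ℕ => (∑ k ∈ Finset.range N, S ^ k) p q) Filter.atTop (nhds (P p q)) := by
    intro p q
    simp only [hpart]
    have hmul : Filter.Tendsto (fun N : ℕ => (S ^ N * P) p q) Filter.atTop (nhds 0) := by
      have : ∀ N : ℕ, (S ^ N * P) p q = ∑ j, (S ^ N) p j * P j q := fun N => Matrix.mul_apply
      simp only [this]
      have h := tendsto_finset_sum (Finset.univ : Finset (Fin n × Fin n))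
        (fun j _ => (hent p j).mul_const (P j q))
      simpa using h
    have : Filter.Tendsto (fun N : ℕ => P p q - (S ^ N * P) p q) Filter.atTop
        (nhds (P p q - 0)) := tendsto_const_nhds.sub hmul
    simpa using this
  -- each psi of partial sum is PSD
  have hPSD : ∀ N : ℕ, (psi (∑ k ∈ Finset.range N, S ^ k)).PosSemidef := by
    intro N
    rw [psi_sum]
    refine posSemidef_sum _ _ fun k _ => ?_
    obtain ⟨ι, hι, M, hM⟩ := pow_rep X k
    have hM' : S ^ k = ∑ t, M t ⊗ₖ M t := by rw [hS]; exact hM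
    rw [hM', psi_sum]
    exact posSemidef_sum _ _ fun t _ => psi_kron_self_posSemidef (M t)
  -- convergence of psi entries
  have hTendPsi : ∀ p q, Filter.Tendsto
      (fun N : ℕ => (psi (∑ k ∈ Finset.range N, S ^ k)) p q) Filter.atTop
      (nhds (psi P p q)) := fun p q => hTend (p.1, q.1) (p.2, q.2)
  -- symmetry
  have hsymm : ∀ p q, psi P q p = psi P p q := by
    intro p q
    have h1 : ∀ N, (psi (∑ k ∈ Finset.range N, S ^ k)) q p
        = (psi (∑ k ∈ Finset.range N, S ^ k)) p q := by
      intro N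
      have := (hPSD N).1
      calc (psi (∑ k ∈ Finset.range N, S ^ k)) q p
          = (psi (∑ k ∈ Finset.range N, S ^ k))ᴴ p q := by
            simp [Matrix.conjTranspose_apply]
        _ = (psi (∑ k ∈ Finset.range N, S ^ k)) p q := by rw [this]
    exact tendsto_nhds_unique (by simpa only [h1] using hTendPsi q p) (hTendPsi p q)
  constructor
  · ext p q
    exact hsymm p q
  · rw [Matrix.posSemidef_iff_dotProduct_mulVec]
    constructor
    · ext p q
      simpa [Matrix.conjTranspose_apply] using hsymm p q
    · intro x
      have hquad : ∀ N : ℕ,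
          0 ≤ star x ⬝ᵥ ((psi (∑ k ∈ Finset.range N, S ^ k)) *ᵥ x) := fun N => (hPSD N).dotProduct_mulVec_nonneg x
      have htend : Filter.Tendsto
          (fun N : ℕ => star x ⬝ᵥ ((psi (∑ k ∈ Finset.range N, S ^ k)) *ᵥ x))
          Filter.atTop (nhds (star x ⬝ᵥ (psi P *ᵥ x))) := by
        have hexp : ∀ (A : Matrix (Fin n × Fin n) (Fin n × Fin n) ℝ),
            star x ⬝ᵥ (A *ᵥ x) = ∑ p, star x p * ∑ q, A p q * x q := by
          intro A; rfl
        simp only [hexp]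
        exact tendsto_finset_sum _ fun p _ =>
          (tendsto_finset_sum _ fun q _ => (hTendPsi p q).mul_const (x q)).const_mul _
      exact ge_of_tendsto' htend hquad
end

section
/- Let X_1, …, X_d be n-by-n real matrices with ‖Σ_i X_i ⊗ X_i‖ < 1 for a consistent matrix norm, and let P = [(I − Σ_i X_i ⊗ X_i)^{-1}]^ψ. Then the rank of P equals the dimension (as a real vector space) of the unital algebra generated by X_1, …, X_d inside M_n(ℝ). -/
/-- Type synonym to carry an alternative norm. -/
def NuSyn (E : Type*) := E

instance {E : Type*} [AddCommGroup E] : AddCommGroup (NuSyn E) := inferInstanceAs (AddCommGroup E)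
instance {E : Type*} [AddCommGroup E] [Module ℝ E] : Module ℝ (NuSyn E) :=
  inferInstanceAs (Module ℝ E)

/-- identity as a linear map from the synonym. -/
def NuSyn.idLM {E : Type*} [AddCommGroup E] [Module ℝ E] : NuSyn E →ₗ[ℝ] E where
  toFun := id
  map_add' _ _ := rfl
  map_smul' _ _ := rfl

lemma nu_norm_bound {E : Type*} [NormedAddCommGroup E] [NormedSpace ℝ E]
    [FiniteDimensional ℝ E] (ν : E → ℝ)
    (hdef : ∀ A, ν A = 0 → A = 0)
    (htri : ∀ A B, ν (A + B) ≤ ν A + ν B)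
    (hsmul : ∀ (c : ℝ) A, ν (c • A) = |c| * ν A) :
    ∃ C : ℝ, 0 ≤ C ∧ ∀ x, ‖x‖ ≤ C * ν x := by
  have hzero : ν 0 = 0 := by
    have := hsmul 0 0; simpa using this
  letI : NormedAddCommGroup (NuSyn E) :=
    AddGroupNorm.toNormedAddCommGroup
      { toFun := ν
        map_zero' := hzero
        add_le' := htri
        neg' := fun x => by
          exact (congrArg ν (neg_one_smul ℝ (x : E))).symm.trans ((hsmul (-1) x).trans (by simp))
        eq_zero_of_map_eq_zero' := hdef }
  letI : NormedSpace ℝ (NuSyn E) :=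
    ⟨fun c x => by
      have : ν (c • x) = |c| * ν x := hsmul c x
      exact le_of_eq (by rw [Real.norm_eq_abs]; exact this)⟩
  haveI : FiniteDimensional ℝ (NuSyn E) := by
    have e : (NuSyn E) ≃ₗ[ℝ] E :=
      { toFun := id, invFun := id, map_add' := fun _ _ => rfl, map_smul' := fun _ _ => rfl,
        left_inv := fun _ => rfl, right_inv := fun _ => rfl }
    exact Module.Finite.equiv e.symm
  have hc : Continuous (NuSyn.idLM (E := E)) :=
    LinearMap.continuous_of_finiteDimensional _
  let f : NuSyn E →L[ℝ] E := ⟨NuSyn.idLM, hc⟩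
  refine ⟨‖f‖, norm_nonneg _, fun x => ?_⟩
  exact f.le_opNorm x


open Matrix Kronecker

def wordProd {n d : ℕ} (X : Fin d → Matrix (Fin n) (Fin n) ℝ) (l : List (Fin d)) :
    Matrix (Fin n) (Fin n) ℝ := (l.map X).prod

lemma wordProd_nil {n d : ℕ} (X : Fin d → Matrix (Fin n) (Fin n) ℝ) :
    wordProd X [] = 1 := rfl

lemma wordProd_cons {n d : ℕ} (X : Fin d → Matrix (Fin n) (Fin n) ℝ) (i : Fin d)
    (l : List (Fin d)) : wordProd X (i :: l) = X i * wordProd X l := by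
  simp [wordProd]

lemma wordProd_mem {n d : ℕ} (X : Fin d → Matrix (Fin n) (Fin n) ℝ) (l : List (Fin d)) :
    wordProd X l ∈ Submonoid.closure (Set.range X) := by
  induction l with
  | nil => rw [wordProd_nil]; exact one_mem _
  | cons i l ih =>
      rw [wordProd_cons]
      exact mul_mem (Submonoid.subset_closure ⟨i, rfl⟩) ih

lemma list_exists_word {n d : ℕ} (X : Fin d → Matrix (Fin n) (Fin n) ℝ)
    (L : List (Matrix (Fin n) (Fin n) ℝ)) (hL : ∀ y ∈ L, y ∈ Set.range X) :
    ∃ l : List (Fin d), wordProd X l = L.prod := by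
  induction L with
  | nil => exact ⟨[], rfl⟩
  | cons y L ih =>
      obtain ⟨i, hi⟩ := hL y (by simp)
      obtain ⟨l, hl⟩ := ih (fun z hz => hL z (by simp [hz]))
      exact ⟨i :: l, by rw [wordProd_cons, hl, hi, List.prod_cons]⟩

lemma mem_closure_exists_word {n d : ℕ} (X : Fin d → Matrix (Fin n) (Fin n) ℝ)
    {x : Matrix (Fin n) (Fin n) ℝ} (hx : x ∈ Submonoid.closure (Set.range X)) :
    ∃ l : List (Fin d), wordProd X l = x := by
  obtain ⟨L, hL, rfl⟩ := Submonoid.exists_list_of_mem_closure hx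
  exact list_exists_word X L hL

lemma pow_sum_kronecker {n d : ℕ} (X : Fin d → Matrix (Fin n) (Fin n) ℝ) (k : ℕ) :
    (∑ i, X i ⊗ₖ X i) ^ k
      = ∑ w : Fin k → Fin d,
          (wordProd X (List.ofFn w)) ⊗ₖ (wordProd X (List.ofFn w)) := by
  induction k with
  | zero =>
      simp [wordProd, List.ofFn_zero, Matrix.one_kronecker_one]
  | succ k ih =>
      rw [pow_succ', ih, Finset.sum_mul_sum]
      rw [← Fintype.sum_prod_type (f := fun p : Fin d × (Fin k → Fin d) =>
        ((X p.1) ⊗ₖ (X p.1)) * ((wordProd X (List.ofFn p.2)) ⊗ₖ (wordProd X (List.ofFn p.2))))]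
      rw [← Equiv.sum_comp (Fin.consEquiv (fun _ : Fin (k+1) => Fin d))
        (fun w => (wordProd X (List.ofFn w)) ⊗ₖ (wordProd X (List.ofFn w)))]
      refine Finset.sum_congr rfl fun p _ => ?_
      rw [← Matrix.mul_kronecker_mul]
      have : wordProd X (List.ofFn ((Fin.consEquiv fun _ => Fin d) p))
          = X p.1 * wordProd X (List.ofFn p.2) := by
        show wordProd X (List.ofFn (Fin.cons p.1 p.2)) = _
        rw [List.ofFn_succ]
        simp [wordProd_cons]
      rw [this]

lemma psi_kronecker {n : ℕ} (A B : Matrix (Fin n) (Fin n) ℝ) :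
    psi (A ⊗ₖ B) = Matrix.vecMulVec (_root_.vec A) (_root_.vec B) := by
  ext p q
  rfl

/-- `vec` as a linear map. -/
def vecLM {n : ℕ} : Matrix (Fin n) (Fin n) ℝ →ₗ[ℝ] (Fin n × Fin n → ℝ) where
  toFun := _root_.vec
  map_add' _ _ := rfl
  map_smul' _ _ := rfl

lemma vecLM_injective {n : ℕ} : Function.Injective (vecLM (n := n)) := by
  intro A B h
  ext i j
  exact congrFun h (i, j)

/-- `psi` as a linear map. -/
def psiLM {n : ℕ} : Matrix (Fin n × Fin n) (Fin n × Fin n) ℝ →ₗ[ℝ]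
    Matrix (Fin n × Fin n) (Fin n × Fin n) ℝ where
  toFun := psi
  map_add' _ _ := rfl
  map_smul' _ _ := rfl

/-- `A ↦ A.mulVec v` as a linear map in the matrix. -/
def mulVecByLM {n : ℕ} (v : Fin n × Fin n → ℝ) :
    Matrix (Fin n × Fin n) (Fin n × Fin n) ℝ →ₗ[ℝ] (Fin n × Fin n → ℝ) where
  toFun A := A.mulVec v
  map_add' A B := Matrix.add_mulVec A B v
  map_smul' c A := by ext p; simp [Matrix.mulVec, dotProduct, Finset.mul_sum, mul_assoc]

lemma vecMulVec_mulVec {n : ℕ} (u w v : Fin n × Fin n → ℝ) :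
    (Matrix.vecMulVec u w).mulVec v = (w ⬝ᵥ v) • u := by
  ext p
  simp [Matrix.mulVec, Matrix.vecMulVec_apply, dotProduct, Finset.mul_sum, mul_comm,
    mul_assoc, Finset.sum_mul]
  exact Finset.sum_congr rfl fun x _ => by ring

lemma dot_vecMulVec {n : ℕ} (u v : Fin n × Fin n → ℝ) :
    v ⬝ᵥ (Matrix.vecMulVec u u).mulVec v = (u ⬝ᵥ v) ^ 2 := by
  rw [vecMulVec_mulVec, dotProduct_smul, dotProduct_comm]
  rw [smul_eq_mul]; ring
lemma mulVec_finset_sum {n : ℕ} {ι : Type*} (s : Finset ι)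
    (f : ι → Matrix (Fin n × Fin n) (Fin n × Fin n) ℝ) (v : Fin n × Fin n → ℝ) :
    (∑ i ∈ s, f i).mulVec v = ∑ i ∈ s, (f i).mulVec v :=
  map_sum (mulVecByLM v) f s

lemma dotProduct_finset_sum {n : ℕ} {ι : Type*} (s : Finset ι)
    (g : ι → (Fin n × Fin n → ℝ)) (v : Fin n × Fin n → ℝ) :
    v ⬝ᵥ (∑ i ∈ s, g i) = ∑ i ∈ s, v ⬝ᵥ g i := by
  simp only [dotProduct, Finset.sum_apply, Finset.mul_sum]
  rw [Finset.sum_comm]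

theorem rank_P_eq_dim_algebra {n d : ℕ} (X : Fin d → Matrix (Fin n) (Fin n) ℝ)
    (ν : Matrix (Fin n × Fin n) (Fin n × Fin n) ℝ → ℝ)
    (hnonneg : ∀ A, 0 ≤ ν A)
    (hdef : ∀ A, ν A = 0 → A = 0)
    (htri : ∀ A B, ν (A + B) ≤ ν A + ν B)
    (hsmul : ∀ (c : ℝ) A, ν (c • A) = |c| * ν A)
    (hsubmul : ∀ A B, ν (A * B) ≤ ν A * ν B)
    (hlt : ν (∑ i, X i ⊗ₖ X i) < 1) :
    (psi (1 - ∑ i, X i ⊗ₖ X i)⁻¹).rank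
      = Module.finrank ℝ (Subalgebra.toSubmodule (Algebra.adjoin ℝ (Set.range X))) := by
  classical
  letI : NormedRing (Matrix (Fin n × Fin n) (Fin n × Fin n) ℝ) := Matrix.linftyOpNormedRing
  letI : NormedAlgebra ℝ (Matrix (Fin n × Fin n) (Fin n × Fin n) ℝ) :=
    Matrix.linftyOpNormedAlgebra
  haveI : CompleteSpace (Matrix (Fin n × Fin n) (Fin n × Fin n) ℝ) :=
    FiniteDimensional.complete ℝ _
  set S : Matrix (Fin n × Fin n) (Fin n × Fin n) ℝ := ∑ i, X i ⊗ₖ X i with hSdef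
  obtain ⟨C, hC0, hC⟩ := nu_norm_bound ν hdef htri hsmul
  -- growth of ν on powers
  have hνpow : ∀ k, ν (S ^ k) ≤ ν 1 * ν S ^ k := by
    intro k
    induction k with
    | zero => simp
    | succ k ih =>
        calc ν (S ^ (k + 1)) = ν (S ^ k * S) := by rw [pow_succ]
          _ ≤ ν (S ^ k) * ν S := hsubmul _ _
          _ ≤ (ν 1 * ν S ^ k) * ν S := by
              exact mul_le_mul_of_nonneg_right ih (hnonneg S)
          _ = ν 1 * ν S ^ (k + 1) := by ring
  have hsummable : Summable (fun k => S ^ k) := by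
    refine Summable.of_norm_bounded (g := fun k => (C * ν 1) * ν S ^ k) ?_ ?_
    · exact ((summable_geometric_of_lt_one (hnonneg S) hlt).mul_left _)
    · intro k
      calc ‖S ^ k‖ ≤ C * ν (S ^ k) := hC _
        _ ≤ C * (ν 1 * ν S ^ k) := by
            exact mul_le_mul_of_nonneg_left (hνpow k) hC0
        _ = (C * ν 1) * ν S ^ k := by ring
  set T : Matrix (Fin n × Fin n) (Fin n × Fin n) ℝ := ∑' k, S ^ k with hTdef
  have hmulT : (1 - S) * T = 1 := by
    have e2 : S * T = ∑' k, S ^ (k + 1) := by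
      rw [← hsummable.tsum_mul_left S]
      exact tsum_congr fun k => (pow_succ' S k).symm
    have e1 : T = S ^ 0 + ∑' k, S ^ (k + 1) := Summable.tsum_eq_zero_add hsummable
    rw [sub_mul, one_mul, e2, e1]
    simp
  have hinv : (1 - S)⁻¹ = T := Matrix.inv_eq_right_inv hmulT
  -- per-vector Neumann series
  have hvec : ∀ v : Fin n × Fin n → ℝ,
      HasSum (fun k => (psi (S ^ k)).mulVec v) ((psi T).mulVec v) := by
    intro v
    have := hsummable.hasSum.mapL ((mulVecByLM v).comp (psiLM (n := n))).toContinuousLinearMap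
    simp [LinearMap.coe_toContinuousLinearMap', LinearMap.comp_apply, mulVecByLM, psiLM,
      LinearMap.coe_mk, AddHom.coe_mk] at this
    exact this
  have hquad : ∀ v : Fin n × Fin n → ℝ,
      HasSum (fun k => v ⬝ᵥ (psi (S ^ k)).mulVec v) (v ⬝ᵥ (psi T).mulVec v) := by
    intro v
    have hdlin : IsLinearMap ℝ (fun w : Fin n × Fin n → ℝ => v ⬝ᵥ w) := by
      constructor
      · intro a b; simp [dotProduct_add]
      · intro c a; simp [dotProduct_smul]
    have := (hvec v).mapL (IsLinearMap.mk' _ hdlin).toContinuousLinearMap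
    simpa [LinearMap.coe_toContinuousLinearMap'] using this
  -- the quadratic term as a sum of squares
  have hterm : ∀ (v : Fin n × Fin n → ℝ) (k : ℕ),
      v ⬝ᵥ (psi (S ^ k)).mulVec v
        = ∑ w : Fin k → Fin d, (_root_.vec (wordProd X (List.ofFn w)) ⬝ᵥ v) ^ 2 := by
    intro v k
    rw [hSdef, pow_sum_kronecker, psi_sum]
    rw [mulVec_finset_sum, dotProduct_finset_sum]
    refine Finset.sum_congr rfl fun w _ => ?_
    rw [psi_kronecker, dot_vecMulVec]
  have htermmem : ∀ (v : Fin n × Fin n → ℝ) (k : ℕ),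
      (psi (S ^ k)).mulVec v
        ∈ Submodule.map (vecLM (n := n))
            (Subalgebra.toSubmodule (Algebra.adjoin ℝ (Set.range X))) := by
    intro v k
    rw [hSdef, pow_sum_kronecker, psi_sum, mulVec_finset_sum]
    refine Submodule.sum_mem _ fun w _ => ?_
    rw [psi_kronecker, _root_.vecMulVec_mulVec]
    refine Submodule.smul_mem _ _ ?_
    refine ⟨wordProd X (List.ofFn w), ?_, rfl⟩
    rw [Algebra.adjoin_eq_span]
    exact Submodule.subset_span (wordProd_mem X (List.ofFn w))
  set W : Submodule ℝ (Fin n × Fin n → ℝ) :=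
    Submodule.map (vecLM (n := n))
      (Subalgebra.toSubmodule (Algebra.adjoin ℝ (Set.range X))) with hWdef
  -- range of psi T is inside W
  have hrange : ∀ v : Fin n × Fin n → ℝ, (psi T).mulVec v ∈ W := by
    intro v
    have hclosed : IsClosed (W : Set (Fin n × Fin n → ℝ)) :=
      Submodule.closed_of_finiteDimensional W
    refine hclosed.mem_of_tendsto (hvec v).tendsto_sum_nat
      (Filter.Eventually.of_forall fun N => ?_)
    exact Submodule.sum_mem _ fun k _ => htermmem v k
  -- kernel characterization
  have hker : ∀ v : Fin n × Fin n → ℝ, (psi T).mulVec v = 0 →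
      ∀ u ∈ W, u ⬝ᵥ v = 0 := by
    intro v hv0 u hu
    have hsum0 : ∑' k, v ⬝ᵥ (psi (S ^ k)).mulVec v = 0 := by
      rw [(hquad v).tsum_eq, hv0, dotProduct_zero]
    have hnn : ∀ k, 0 ≤ v ⬝ᵥ (psi (S ^ k)).mulVec v := by
      intro k
      rw [hterm]
      exact Finset.sum_nonneg fun w _ => sq_nonneg _
    have hzero : ∀ k, v ⬝ᵥ (psi (S ^ k)).mulVec v = 0 := by
      intro k
      refine le_antisymm ?_ (hnn k)
      calc v ⬝ᵥ (psi (S ^ k)).mulVec v ≤ ∑' k, v ⬝ᵥ (psi (S ^ k)).mulVec v :=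
            Summable.le_tsum (hquad v).summable k fun j _ => hnn j
        _ = 0 := hsum0
    have hword : ∀ l : List (Fin d), _root_.vec (wordProd X l) ⬝ᵥ v = 0 := by
      intro l
      have h := hzero l.length
      rw [hterm] at h
      have := (Finset.sum_eq_zero_iff_of_nonneg (fun w _ => sq_nonneg
        (_root_.vec (wordProd X (List.ofFn w)) ⬝ᵥ v))).mp h (l.get) (Finset.mem_univ _)
      have h2 : _root_.vec (wordProd X (List.ofFn l.get)) ⬝ᵥ v = 0 := by
        exact (pow_eq_zero_iff two_ne_zero).mp this
      rwa [List.ofFn_get] at h2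
    obtain ⟨m, hm, rfl⟩ := hu
    rw [Algebra.adjoin_eq_span] at hm
    induction hm using Submodule.span_induction with
    | mem x hx =>
        obtain ⟨l, rfl⟩ := mem_closure_exists_word X hx
        exact hword l
    | zero => rw [map_zero, zero_dotProduct]
    | add x y hx hy ihx ihy => rw [map_add, add_dotProduct, ihx, ihy, add_zero]
    | smul c x hx ihx => rw [LinearMap.map_smul, smul_dotProduct, ihx, smul_zero]
  -- injectivity on W
  have hinj : Function.Injective ((psi T).mulVecLin.comp W.subtype) := by
    rw [← LinearMap.ker_eq_bot, LinearMap.ker_eq_bot']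
    intro x hx
    have hx0 : (psi T).mulVec (x : Fin n × Fin n → ℝ) = 0 := by
      simpa [Matrix.mulVecLin_apply] using hx
    have := hker _ hx0 x x.2
    have hx00 : (x : Fin n × Fin n → ℝ) = 0 := dotProduct_self_eq_zero.mp this
    exact Subtype.ext hx00
  -- rank computation
  rw [hinv]
  show Module.finrank ℝ (LinearMap.range (psi T).mulVecLin) = _
  have hle : LinearMap.range (psi T).mulVecLin ≤ W := by
    rintro x ⟨v, rfl⟩
    simpa [Matrix.mulVecLin_apply] using hrange v
  have h1 : Module.finrank ℝ (LinearMap.range (psi T).mulVecLin) ≤ Module.finrank ℝ W :=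
    Submodule.finrank_mono hle
  have h2 : Module.finrank ℝ W ≤ Module.finrank ℝ (LinearMap.range (psi T).mulVecLin) := by
    have e1 : Module.finrank ℝ (LinearMap.range ((psi T).mulVecLin.comp W.subtype))
        = Module.finrank ℝ W := LinearMap.finrank_range_of_inj hinj
    have e2 : LinearMap.range ((psi T).mulVecLin.comp W.subtype)
        ≤ LinearMap.range (psi T).mulVecLin := LinearMap.range_comp_le_range _ _
    rw [← e1]
    exact Submodule.finrank_mono e2
  have hWrank : Module.finrank ℝ W
      = Module.finrank ℝ (Subalgebra.toSubmodule (Algebra.adjoin ℝ (Set.range X))) := by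
    rw [hWdef]
    exact (LinearEquiv.finrank_eq
      (Submodule.equivMapOfInjective (vecLM (n := n)) vecLM_injective _)).symm
  omega
end
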